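/- Let B > 0, N ≥ 1, V ∈ ℕ, and let a : Fin V → ℝ be item costs with 0 ≤ a_v ≤ B for all v and Σ_v a_v ≤ N·B. Then there exists a nondecreasing map τ : Fin V → Fin (2N) such that every bin load satisfies Σ_{v : τ(v) = n} a_v ≤ B, i.e., the items can be packed in their given order into at most 2N bins of capacity B. -/

import Mathlib

open scoped BigOperators
open Finset

/-- Next-fit packing state: (current bin index, current bin load) after processing
items `0, ..., v-1`. -/
noncomputable def pack (B : ℝ) (a : ℕ → ℝ) : ℕ → ℕ × ℝ :=
  fun v => Nat.rec (0, 0)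
    (fun v p => if p.2 + a v ≤ B then (p.1, p.2 + a v) else (p.1 + 1, a v)) v

lemma pack_zero (B : ℝ) (a : ℕ → ℝ) : pack B a 0 = (0, 0) := rfl

lemma pack_succ (B : ℝ) (a : ℕ → ℝ) (v : ℕ) :
    pack B a (v + 1) = if (pack B a v).2 + a v ≤ B
      then ((pack B a v).1, (pack B a v).2 + a v)
      else ((pack B a v).1 + 1, a v) := rfl

lemma pack_load_le (B : ℝ) (a : ℕ → ℝ) (hB : 0 < B) (haB : ∀ v, a v ≤ B) :
    ∀ v, (pack B a v).2 ≤ B := by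
  intro v
  induction v with
  | zero => simpa [pack_zero] using hB.le
  | succ v ih =>
    rw [pack_succ]
    split
    · assumption
    · exact haB v

lemma pack_fst_mono (B : ℝ) (a : ℕ → ℝ) : Monotone fun v => (pack B a v).1 := by
  apply monotone_nat_of_le_succ
  intro v
  simp only [pack_succ]
  split <;> simp

lemma pack_sum_eq (B : ℝ) (a : ℕ → ℝ) : ∀ v,
    ∑ w ∈ (range v).filter (fun w => (pack B a (w+1)).1 = (pack B a v).1), a w
      = (pack B a v).2 := by
  intro v
  induction v with
  | zero => rw [Finset.range_zero, Finset.filter_empty, Finset.sum_empty, pack_zero]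
  | succ v ih =>
    have hmono := pack_fst_mono B a
    rw [Finset.range_add_one, Finset.filter_insert]
    by_cases h : (pack B a v).2 + a v ≤ B
    · have hfst : (pack B a (v+1)).1 = (pack B a v).1 := by rw [pack_succ, if_pos h]
      have hsnd : (pack B a (v+1)).2 = (pack B a v).2 + a v := by rw [pack_succ, if_pos h]
      rw [if_pos rfl, Finset.sum_insert (by simp), hsnd]
      simp only [hfst]
      rw [ih]
      ring
    · have hfst : (pack B a (v+1)).1 = (pack B a v).1 + 1 := by rw [pack_succ, if_neg h]
      have hsnd : (pack B a (v+1)).2 = a v := by rw [pack_succ, if_neg h]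
      rw [if_pos rfl, hsnd]
      simp only [hfst]
      have he : (range v).filter (fun w => (pack B a (w+1)).1 = (pack B a v).1 + 1) = ∅ := by
        apply Finset.filter_false_of_mem
        intro w hw
        have : (pack B a (w+1)).1 ≤ (pack B a v).1 :=
          hmono (Finset.mem_range.mp hw)
        omega
      rw [Finset.sum_insert (by simp), he]
      simp

lemma pack_bin_le (B : ℝ) (a : ℕ → ℝ) (hB : 0 < B) (haB : ∀ v, a v ≤ B) : ∀ v n,
    ∑ w ∈ (range v).filter (fun w => (pack B a (w+1)).1 = n), a w ≤ B := by
  intro v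
  induction v with
  | zero => simp [hB.le]
  | succ v ih =>
    intro n
    rw [Finset.range_add_one, Finset.filter_insert]
    by_cases hn : (pack B a (v+1)).1 = n
    · rw [if_pos hn, Finset.sum_insert (by simp)]
      subst hn
      by_cases h : (pack B a v).2 + a v ≤ B
      · have hfst : (pack B a (v+1)).1 = (pack B a v).1 := by rw [pack_succ, if_pos h]
        simp only [hfst]
        rw [pack_sum_eq]
        linarith
      · have hfst : (pack B a (v+1)).1 = (pack B a v).1 + 1 := by rw [pack_succ, if_neg h]
        have he : (range v).filter (fun w => (pack B a (w+1)).1 = (pack B a (v+1)).1) = ∅ := by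
          apply Finset.filter_false_of_mem
          intro w hw
          have : (pack B a (w+1)).1 ≤ (pack B a v).1 :=
            pack_fst_mono B a (Finset.mem_range.mp hw)
          omega
        rw [he]
        simpa using haB v
    · rw [if_neg hn]; exact ih n

lemma pack_prefix_ge (B : ℝ) (a : ℕ → ℝ) (ha0 : ∀ v, 0 ≤ a v) : ∀ v,
    ((pack B a v).1 : ℝ) * (B/2) + (pack B a v).2 / 2 ≤ ∑ w ∈ range v, a w ∧
    (1 ≤ (pack B a v).1 → ((pack B a v).1 : ℝ) * (B/2) < ∑ w ∈ range v, a w) := by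
  intro v
  induction v with
  | zero => simp [pack_zero]
  | succ v ih =>
    obtain ⟨ih1, ih2⟩ := ih
    rw [Finset.sum_range_succ]
    by_cases h : (pack B a v).2 + a v ≤ B
    · have hfst : (pack B a (v+1)).1 = (pack B a v).1 := by rw [pack_succ, if_pos h]
      have hsnd : (pack B a (v+1)).2 = (pack B a v).2 + a v := by rw [pack_succ, if_pos h]
      rw [hfst, hsnd]
      constructor
      · have := ha0 v
        linarith
      · intro h1
        have := ha0 v
        linarith [ih2 h1]
    · have hfst : (pack B a (v+1)).1 = (pack B a v).1 + 1 := by rw [pack_succ, if_neg h]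
      have hsnd : (pack B a (v+1)).2 = a v := by rw [pack_succ, if_neg h]
      rw [hfst, hsnd]
      push_neg at h
      constructor
      · push_cast
        have := ha0 v
        linarith
      · intro _
        push_cast
        have := ha0 v
        linarith

theorem ordered_bin_packing (B : ℝ) (hB : 0 < B) (N V : ℕ) (hN : 1 ≤ N)
    (a : Fin V → ℝ) (ha0 : ∀ v, 0 ≤ a v) (haB : ∀ v, a v ≤ B)
    (hsum : ∑ v, a v ≤ (N : ℝ) * B) :
    ∃ τ : Fin V → Fin (2 * N), Monotone τ ∧
      ∀ n : Fin (2 * N), ∑ v ∈ Finset.univ.filter (fun v => τ v = n), a v ≤ B := by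
  set a' : ℕ → ℝ := fun w => if h : w < V then a ⟨w, h⟩ else 0 with ha'
  have ha'0 : ∀ w, 0 ≤ a' w := by
    intro w; simp only [ha']; split
    · exact ha0 _
    · exact le_refl 0
  have ha'B : ∀ w, a' w ≤ B := by
    intro w; simp only [ha']; split
    · exact haB _
    · exact hB.le
  have hsum' : ∑ w ∈ range V, a' w ≤ (N : ℝ) * B := by
    rw [← Fin.sum_univ_eq_sum_range]
    calc ∑ w : Fin V, a' w.val = ∑ v : Fin V, a v := by
          apply Finset.sum_congr rfl
          intro v _
          simp [ha', v.isLt]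
    _ ≤ (N : ℝ) * B := hsum
  have hlast : (pack B a' V).1 < 2 * N := by
    by_contra hcon
    push_neg at hcon
    have h1 : 1 ≤ (pack B a' V).1 := by omega
    have hstrict := (pack_prefix_ge B a' ha'0 V).2 h1
    have hge : ((2 * N : ℕ) : ℝ) * (B/2) ≤ ((pack B a' V).1 : ℝ) * (B/2) := by
      apply mul_le_mul_of_nonneg_right _ (by linarith)
      exact_mod_cast hcon
    push_cast at hge
    nlinarith [hsum']
  have hbin : ∀ v : Fin V, (pack B a' (v.val + 1)).1 < 2 * N := by
    intro v
    exact lt_of_le_of_lt (pack_fst_mono B a' v.isLt) hlast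
  refine ⟨fun v => ⟨(pack B a' (v.val + 1)).1, hbin v⟩, ?_, ?_⟩
  · intro v w hvw
    exact pack_fst_mono B a' (by omega : v.val + 1 ≤ w.val + 1)
  · intro n
    have key := pack_bin_le B a' hB ha'B V n.val
    calc ∑ v ∈ Finset.univ.filter
          (fun v : Fin V => (⟨(pack B a' (v.val + 1)).1, hbin v⟩ : Fin (2*N)) = n), a v
        = ∑ v : Fin V, if (pack B a' (v.val + 1)).1 = n.val then a v else 0 := by
          rw [Finset.sum_filter]
          apply Finset.sum_congr rfl
          intro v _
          congr 1
          simp [Fin.ext_iff]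
    _ = ∑ w ∈ range V, if (pack B a' (w + 1)).1 = n.val then a' w else 0 := by
          rw [← Fin.sum_univ_eq_sum_range]
          apply Finset.sum_congr rfl
          intro v _
          simp [ha', v.isLt]
    _ = ∑ w ∈ (range V).filter (fun w => (pack B a' (w+1)).1 = n.val), a' w := by
          rw [Finset.sum_filter]
    _ ≤ B := key
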